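/- arXiv:1407.5176 — 2 statements merged into one kernel-verified Lean document; each statement's English description precedes it below -/
import Mathlib

section
/- (Mean-field bound for the mixture state of the DHM.) For every β > 0, J > 0, σ ∈ (1/2,1), h ∈ ℝ and all real m_1, m_2, the thermodynamic-limit free energy f(h,β,J,σ) = lim_{k→∞} f_k(h,β,J,σ) satisfies f(h,β,J,σ) ≥ log 2 + (1/2) log cosh(βh + βJ C_{2σ−1} m_1) + (1/2) log cosh(βh + βJ C_{2σ−1} m_2) − (βJ C_{2σ})/2 − (βJ C_{2σ−1}/2)·(m_1² + m_2²)/2. -/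
open Real Filter

/-- The ±1 value of a Boolean spin. -/
noncomputable def spin (b : Bool) : ℝ := if b then 1 else -1

/-- Embedding of the first half of the sites. -/
def finLeft {k : ℕ} (i : Fin (2 ^ k)) : Fin (2 ^ (k + 1)) :=
  ⟨i.1, lt_of_lt_of_le i.2 (Nat.pow_le_pow_right (by norm_num) (Nat.le_succ k))⟩

/-- Embedding of the second half of the sites. -/
def finRight {k : ℕ} (i : Fin (2 ^ k)) : Fin (2 ^ (k + 1)) :=
  ⟨i.1 + 2 ^ k, by
    have h2 : 2 ^ (k + 1) = 2 ^ k + 2 ^ k := by rw [pow_succ]; ring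
    have := i.2; omega⟩

/-- The Dyson hierarchical model Hamiltonian, defined recursively. -/
noncomputable def dysonH (J σ : ℝ) : (k : ℕ) → (Fin (2 ^ k) → Bool) → ℝ
  | 0, _ => 0
  | (k + 1), S =>
      dysonH J σ k (fun i => S (finLeft i)) + dysonH J σ k (fun i => S (finRight i)) -
        J / (2 : ℝ) ^ (2 * σ * ((k : ℝ) + 1)) *
          ∑ i : Fin (2 ^ (k + 1)), ∑ j : Fin (2 ^ (k + 1)),
            if i < j then spin (S i) * spin (S j) else 0

/-- The finite-volume free energy of the Dyson hierarchical model. -/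
noncomputable def dysonF (h β J σ : ℝ) (k : ℕ) : ℝ :=
  ((2 : ℝ) ^ k)⁻¹ * Real.log (∑ S : Fin (2 ^ k) → Bool,
    Real.exp (-β * dysonH J σ k S + β * h * ∑ i, spin (S i)))

/-- The constant `C_y = 2^{-y} / (1 - 2^{-y})`. -/
noncomputable def Cconst (y : ℝ) : ℝ := (2 : ℝ) ^ (-y) / (1 - (2 : ℝ) ^ (-y))

/- ----------------- auxiliary lemmas ----------------- -/

lemma spin_sq (b : Bool) : spin b * spin b = 1 := by
  unfold spin; cases b <;> norm_num

lemma pair_sum_eq {N : ℕ} (x : Fin N → ℝ) (hx : ∀ i, x i * x i = 1) :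
    ∑ i : Fin N, ∑ j : Fin N, (if i < j then x i * x j else 0)
      = ((∑ i, x i) ^ 2 - N) / 2 := by
  have key : (∑ i, x i) ^ 2 =
      2 * (∑ i : Fin N, ∑ j : Fin N, (if i < j then x i * x j else 0)) + N := by
    rw [sq, Finset.sum_mul_sum]
    have : ∀ i j : Fin N, x i * x j =
        (if i < j then x i * x j else 0) + (if j < i then x i * x j else 0)
          + (if i = j then (1:ℝ) else 0) := by
      intro i j
      rcases lt_trichotomy i j with hlt | heq | hgt
      · simp [hlt, not_lt.mpr hlt.le, hlt.ne]
      · simp [heq, hx]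
      · simp [hgt, not_lt.mpr hgt.le, hgt.ne']
    rw [Finset.sum_congr rfl fun i _ => Finset.sum_congr rfl fun j _ => this i j]
    simp only [Finset.sum_add_distrib]
    have hswap : ∑ i : Fin N, ∑ j : Fin N, (if j < i then x i * x j else 0)
        = ∑ i : Fin N, ∑ j : Fin N, (if i < j then x i * x j else 0) := by
      rw [Finset.sum_comm]
      exact Finset.sum_congr rfl fun i _ => Finset.sum_congr rfl fun j _ => by
        rcases lt_or_ge i j with hl | hl
        · simp [hl, not_lt.mpr hl.le, mul_comm]
        · simp [not_lt.mpr hl]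
    have hdiag : ∑ i : Fin N, ∑ j : Fin N, (if i = j then (1:ℝ) else 0) = N := by simp
    rw [hswap, hdiag]; ring
  linarith [key]

lemma pair_sum_ge {N : ℕ} (S : Fin N → Bool) (m : ℝ) :
    ∑ i : Fin N, ∑ j : Fin N, (if i < j then spin (S i) * spin (S j) else 0)
      ≥ m * N * (∑ i, spin (S i)) - m ^ 2 * (N:ℝ) ^ 2 / 2 - N / 2 := by
  rw [pair_sum_eq _ (fun i => spin_sq _)]
  nlinarith [sq_nonneg ((∑ i, spin (S i)) - m * N)]

lemma sum_split {k : ℕ} (f : Fin (2 ^ (k + 1)) → ℝ) :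
    ∑ i, f i = ∑ i : Fin (2 ^ k), f (finLeft i) + ∑ i : Fin (2 ^ k), f (finRight i) := by
  have h : 2 ^ (k+1) = 2 ^ k + 2 ^ k := by rw [pow_succ]; ring
  rw [← Fin.sum_congr' f h.symm, Fin.sum_univ_add]
  congr 1 <;>
  exact Finset.sum_congr rfl fun i _ => by
    congr 1; ext
    simp [finLeft, finRight, Fin.cast, Fin.castAdd, Fin.castLE, Fin.natAdd, Nat.add_comm]

lemma sum_exp_factor {N : ℕ} (a : Fin N → ℝ) :
    ∑ S : Fin N → Bool, Real.exp (∑ i, a i * spin (S i))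
      = ∏ i : Fin N, (2 * Real.cosh (a i)) := by
  have step : ∀ S : Fin N → Bool, Real.exp (∑ i, a i * spin (S i))
      = ∏ i, Real.exp (a i * spin (S i)) := fun S => Real.exp_sum _ _
  rw [Finset.sum_congr rfl fun S _ => step S,
    ← Fintype.prod_sum (fun (i : Fin N) (b : Bool) => Real.exp (a i * spin b))]
  exact Finset.prod_congr rfl fun i _ => by
    rw [Fintype.sum_bool]
    simp only [spin, Real.cosh_eq]
    norm_num
    ring

noncomputable def geomA (σ : ℝ) (k : ℕ) : ℝ :=
  ∑ l ∈ Finset.range k, (2:ℝ) ^ ((1 - 2*σ) * ((l:ℝ)+1))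
noncomputable def geomD (σ : ℝ) (k : ℕ) : ℝ :=
  ∑ l ∈ Finset.range k, (2:ℝ) ^ ((-(2*σ)) * ((l:ℝ)+1))

lemma dysonH_le (J σ : ℝ) (hJ : 0 < J) (m : ℝ) :
    ∀ (k : ℕ) (S : Fin (2^k) → Bool),
      dysonH J σ k S ≤ -(J * m * geomA σ k * (∑ i, spin (S i)))
        + J * (2:ℝ)^k * (geomA σ k * m^2 + geomD σ k) / 2
  | 0, S => by simp [dysonH, geomA, geomD]
  | (k+1), S => by
    have IHL := dysonH_le J σ hJ m k (fun i => S (finLeft i))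
    have IHR := dysonH_le J σ hJ m k (fun i => S (finRight i))
    set E := (2:ℝ) ^ (2 * σ * ((k:ℝ) + 1)) with hEdef
    have hE : 0 < E := Real.rpow_pos_of_pos (by norm_num) _
    set g := (2:ℝ) ^ ((1 - 2*σ) * ((k:ℝ)+1)) with hgdef
    set q := (2:ℝ) ^ ((-(2*σ)) * ((k:ℝ)+1)) with hqdef
    have hN : ((2^(k+1) : ℕ) : ℝ) = (2:ℝ)^(k+1) := by push_cast; ring
    have hNE : (2:ℝ)^(k+1) = E * g := by
      rw [hEdef, hgdef, ← Real.rpow_add (by norm_num), ← Real.rpow_natCast 2 (k+1)]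
      congr 1; push_cast; ring
    have hEq : E * q = 1 := by
      rw [hEdef, hqdef, ← Real.rpow_add (by norm_num)]
      norm_num
    have hA : geomA σ (k+1) = geomA σ k + g := by
      rw [geomA, Finset.sum_range_succ]; rfl
    have hD : geomD σ (k+1) = geomD σ k + q := by
      rw [geomD, Finset.sum_range_succ]; rfl
    have hP := pair_sum_ge S m
    have hsplit := sum_split (fun i => spin (S i))
    have htop : - (J / E *
        (∑ i : Fin (2 ^ (k + 1)), ∑ j : Fin (2 ^ (k + 1)),
          if i < j then spin (S i) * spin (S j) else 0))
        ≤ -(J * m * g * (∑ i : Fin (2^(k+1)), spin (S i)))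
          + J * (2:ℝ)^(k+1) * (g * m^2 + q) / 2 := by
      have h1 : J / E * (m * ((2^(k+1):ℕ):ℝ) * (∑ i : Fin (2^(k+1)), spin (S i))
            - m ^ 2 * (((2^(k+1):ℕ)):ℝ) ^ 2 / 2 - ((2^(k+1):ℕ):ℝ) / 2)
          ≤ J / E * (∑ i : Fin (2 ^ (k + 1)), ∑ j : Fin (2 ^ (k + 1)),
            if i < j then spin (S i) * spin (S j) else 0) :=
        mul_le_mul_of_nonneg_left hP (by positivity)
      have h2 : J / E * (m * ((2^(k+1):ℕ):ℝ) * (∑ i : Fin (2^(k+1)), spin (S i))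
            - m ^ 2 * (((2^(k+1):ℕ)):ℝ) ^ 2 / 2 - ((2^(k+1):ℕ):ℝ) / 2)
          = J * m * g * (∑ i : Fin (2^(k+1)), spin (S i))
            - J * (2:ℝ)^(k+1) * (g * m^2 + q) / 2 := by
        rw [hN, hNE]
        have hq' : q = 1 / E := by field_simp [hEq]; linarith [hEq]
        rw [hq']
        field_simp
        ring
      linarith
    rw [hsplit] at htop
    show dysonH J σ (k+1) S ≤ _
    rw [dysonH, ← hEdef, hA, hD, hsplit]
    have hpow : (2:ℝ)^(k+1) = 2 * (2:ℝ)^k := by ring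
    rw [hpow] at htop ⊢
    ring_nf at htop ⊢
    ring_nf at IHL IHR
    linarith [IHL, IHR, htop]

lemma exponent_bound (β J σ h m1 m2 : ℝ) (hβ : 0 < β) (hJ : 0 < J) (k : ℕ)
    (S : Fin (2^(k+1)) → Bool) :
    -β * dysonH J σ (k+1) S + β * h * ∑ i, spin (S i)
      ≥ (∑ i : Fin (2^(k+1)),
          (if (i:ℕ) < 2^k then β*h + β*J*m1*geomA σ k else β*h + β*J*m2*geomA σ k) * spin (S i))
        - (β*J*(2:ℝ)^k*(geomA σ k*(m1^2+m2^2)/2) + β*J*(2:ℝ)^(k+1)*geomD σ (k+1)/2) := by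
  have HL := dysonH_le J σ hJ m1 k (fun i => S (finLeft i))
  have HR := dysonH_le J σ hJ m2 k (fun i => S (finRight i))
  set E := (2:ℝ) ^ (2 * σ * ((k:ℝ) + 1)) with hEdef
  have hE : 0 < E := Real.rpow_pos_of_pos (by norm_num) _
  set g := (2:ℝ) ^ ((1 - 2*σ) * ((k:ℝ)+1)) with hgdef
  set q := (2:ℝ) ^ ((-(2*σ)) * ((k:ℝ)+1)) with hqdef
  have hN : ((2^(k+1) : ℕ) : ℝ) = (2:ℝ)^(k+1) := by push_cast; ring
  have hNE : (2:ℝ)^(k+1) = E * g := by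
    rw [hEdef, hgdef, ← Real.rpow_add (by norm_num), ← Real.rpow_natCast 2 (k+1)]
    congr 1; push_cast; ring
  have hEq : E * q = 1 := by
    rw [hEdef, hqdef, ← Real.rpow_add (by norm_num)]; norm_num
  have hgq : g = (2:ℝ)^(k+1) * q := by
    rw [hNE]; nlinarith [hEq]
  have hD : geomD σ (k+1) = geomD σ k + q := by
    rw [geomD, Finset.sum_range_succ]; rfl
  have hP := pair_sum_ge S 0
  simp only [zero_mul, ne_eq, OfNat.ofNat_ne_zero, not_false_eq_true, zero_pow,
    zero_div, zero_sub, sub_zero] at hP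
  have htop : β * (J / E) *
      (∑ i : Fin (2 ^ (k + 1)), ∑ j : Fin (2 ^ (k + 1)),
        if i < j then spin (S i) * spin (S j) else 0)
      ≥ -(β * J * g / 2) := by
    have h1 : β * (J / E) * (-(((2^(k+1):ℕ):ℝ)) / 2)
        ≤ β * (J / E) * (∑ i : Fin (2 ^ (k + 1)), ∑ j : Fin (2 ^ (k + 1)),
          if i < j then spin (S i) * spin (S j) else 0) := by
      apply mul_le_mul_of_nonneg_left _ (by positivity)
      linarith [hP]
    have h2 : β * (J / E) * (-(((2^(k+1):ℕ):ℝ)) / 2) = -(β * J * g / 2) := by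
      rw [hN, hNE]; field_simp
    linarith
  have hsplitA : (∑ i : Fin (2^(k+1)),
        (if (i:ℕ) < 2^k then β*h + β*J*m1*geomA σ k else β*h + β*J*m2*geomA σ k) * spin (S i))
      = (β*h + β*J*m1*geomA σ k) * (∑ i : Fin (2^k), spin (S (finLeft i)))
        + (β*h + β*J*m2*geomA σ k) * (∑ i : Fin (2^k), spin (S (finRight i))) := by
    rw [sum_split (fun i => (if (i:ℕ) < 2^k then β*h + β*J*m1*geomA σ k
        else β*h + β*J*m2*geomA σ k) * spin (S i))]
    have hL : ∀ i : Fin (2^k), ((finLeft i : Fin (2^(k+1))) : ℕ) < 2^k := fun i => i.2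
    have hR : ∀ i : Fin (2^k), ¬ ((finRight i : Fin (2^(k+1))) : ℕ) < 2^k := fun i => by
      simp [finRight]
    simp only [hL, hR, if_true, if_false, ite_true, ite_false]
    rw [Finset.mul_sum, Finset.mul_sum]
  have hsplitS := sum_split (fun i => spin (S i))
  rw [dysonH, ← hEdef, hsplitA, hsplitS, hD]
  have hHL : -β * dysonH J σ k (fun i => S (finLeft i))
      ≥ β * (J * m1 * geomA σ k * (∑ i : Fin (2^k), spin (S (finLeft i))))
        - β * (J * (2:ℝ)^k * (geomA σ k * m1^2 + geomD σ k) / 2) := by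
    have := mul_le_mul_of_nonneg_left HL hβ.le
    ring_nf at this ⊢
    linarith [this]
  have hHR : -β * dysonH J σ k (fun i => S (finRight i))
      ≥ β * (J * m2 * geomA σ k * (∑ i : Fin (2^k), spin (S (finRight i))))
        - β * (J * (2:ℝ)^k * (geomA σ k * m2^2 + geomD σ k) / 2) := by
    have := mul_le_mul_of_nonneg_left HR hβ.le
    ring_nf at this ⊢
    linarith [this]
  have hpow : (2:ℝ)^(k+1) = 2 * (2:ℝ)^k := by ring
  rw [hpow] at hgq ⊢
  rw [hgq] at htop
  ring_nf at hHL hHR htop ⊢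
  linarith [hHL, hHR, htop]

lemma dysonF_ge (β J σ h m1 m2 : ℝ) (hβ : 0 < β) (hJ : 0 < J) (k : ℕ) :
    dysonF h β J σ (k+1) ≥ Real.log 2
      + (1/2) * Real.log (Real.cosh (β*h + β*J*m1*geomA σ k))
      + (1/2) * Real.log (Real.cosh (β*h + β*J*m2*geomA σ k))
      - β*J*geomA σ k*(m1^2+m2^2)/4 - β*J*geomD σ (k+1)/2 := by
  set c1 := β*h + β*J*m1*geomA σ k with hc1
  set c2 := β*h + β*J*m2*geomA σ k with hc2
  set a : Fin (2^(k+1)) → ℝ := fun i => if (i:ℕ) < 2^k then c1 else c2 with ha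
  set C := β*J*(2:ℝ)^k*(geomA σ k*(m1^2+m2^2)/2) + β*J*(2:ℝ)^(k+1)*geomD σ (k+1)/2 with hC
  have hsum_ge : ∑ S : Fin (2^(k+1)) → Bool,
        Real.exp (-β * dysonH J σ (k+1) S + β * h * ∑ i, spin (S i))
      ≥ Real.exp (-C) * ∏ i : Fin (2^(k+1)), (2 * Real.cosh (a i)) := by
    rw [← sum_exp_factor a, Finset.mul_sum]
    apply Finset.sum_le_sum
    intro S _
    rw [← Real.exp_add]
    apply Real.exp_le_exp.2
    have := exponent_bound β J σ h m1 m2 hβ hJ k S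
    have h' : ∑ i : Fin (2^(k+1)), a i * spin (S i)
        = ∑ i : Fin (2^(k+1)),
          (if (i:ℕ) < 2^k then β*h + β*J*m1*geomA σ k else β*h + β*J*m2*geomA σ k) * spin (S i) := rfl
    rw [h', hC]
    linarith [this]
  have hprodpos : (0:ℝ) < ∏ i : Fin (2^(k+1)), (2 * Real.cosh (a i)) :=
    Finset.prod_pos fun i _ => by positivity
  have hlog : Real.log (∑ S : Fin (2^(k+1)) → Bool,
        Real.exp (-β * dysonH J σ (k+1) S + β * h * ∑ i, spin (S i)))
      ≥ -C + (2:ℝ)^k * (Real.log (2 * Real.cosh c1) + Real.log (2 * Real.cosh c2)) := by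
    have h1 : Real.log (Real.exp (-C) * ∏ i : Fin (2^(k+1)), (2 * Real.cosh (a i)))
        ≤ Real.log (∑ S : Fin (2^(k+1)) → Bool,
          Real.exp (-β * dysonH J σ (k+1) S + β * h * ∑ i, spin (S i))) :=
      Real.log_le_log (by positivity) hsum_ge
    have h2 : Real.log (Real.exp (-C) * ∏ i : Fin (2^(k+1)), (2 * Real.cosh (a i)))
        = -C + (2:ℝ)^k * (Real.log (2 * Real.cosh c1) + Real.log (2 * Real.cosh c2)) := by
      rw [Real.log_mul (Real.exp_ne_zero _) hprodpos.ne', Real.log_exp]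
      congr 1
      rw [Real.log_prod (fun i _ => by positivity)]
      rw [sum_split (fun i => Real.log (2 * Real.cosh (a i)))]
      have hL : ∀ i : Fin (2^k), a (finLeft i) = c1 := fun i => by
        simp [ha, finLeft, i.2]
      have hR : ∀ i : Fin (2^k), a (finRight i) = c2 := fun i => by
        simp [ha, finRight]
      simp only [hL, hR, Finset.sum_const, Finset.card_univ, Fintype.card_fin,
        nsmul_eq_mul]
      push_cast
      ring
    linarith
  rw [dysonF, ge_iff_le]
  have hpos : (0:ℝ) < ((2:ℝ)^(k+1))⁻¹ := by positivity
  have hineq : ((2:ℝ)^(k+1))⁻¹ * (-C + (2:ℝ)^k * (Real.log (2 * Real.cosh c1) + Real.log (2 * Real.cosh c2)))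
      ≤ ((2:ℝ)^(k+1))⁻¹ * Real.log (∑ S : Fin (2^(k+1)) → Bool,
        Real.exp (-β * dysonH J σ (k+1) S + β * h * ∑ i, spin (S i))) :=
    mul_le_mul_of_nonneg_left hlog hpos.le
  have hid : ((2:ℝ)^(k+1))⁻¹ * (-C + (2:ℝ)^k * (Real.log (2 * Real.cosh c1) + Real.log (2 * Real.cosh c2)))
      = Real.log 2 + (1/2) * Real.log (Real.cosh c1) + (1/2) * Real.log (Real.cosh c2)
        - β*J*geomA σ k*(m1^2+m2^2)/4 - β*J*geomD σ (k+1)/2 := by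
    rw [Real.log_mul two_ne_zero (Real.cosh_pos (x := c1)).ne',
        Real.log_mul two_ne_zero (Real.cosh_pos (x := c2)).ne', hC]
    have h2k : ((2:ℝ)^(k+1))⁻¹ * (2:ℝ)^k = 1/2 := by
      rw [pow_succ]; field_simp
    field_simp
    ring
  exact le_trans hid.ge hineq

lemma geom_tendsto (y : ℝ) (hy : 0 < y) :
    Tendsto (fun k => ∑ l ∈ Finset.range k, (2:ℝ) ^ ((-y) * ((l:ℝ)+1))) atTop
      (nhds (Cconst y)) := by
  set r := (2:ℝ)^(-y) with hr
  have hr0 : 0 ≤ r := Real.rpow_nonneg (by norm_num) _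
  have hr1 : r < 1 := Real.rpow_lt_one_of_one_lt_of_neg (by norm_num) (by linarith)
  have hterm : ∀ l : ℕ, (2:ℝ) ^ ((-y) * ((l:ℝ)+1)) = r * r^l := by
    intro l
    rw [hr, ← Real.rpow_natCast ((2:ℝ)^(-y)) l,
        ← Real.rpow_mul (by norm_num : (0:ℝ) ≤ 2),
        ← Real.rpow_add (by norm_num : (0:ℝ) < 2)]
    congr 1; ring
  simp only [hterm, ← Finset.mul_sum]
  have h2 := (hasSum_geometric_of_lt_one hr0 hr1).tendsto_sum_nat.const_mul r
  have hc : Cconst y = r * (1-r)⁻¹ := by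
    simp only [Cconst, hr, div_eq_mul_inv]
  rw [hc]; exact h2

lemma geomA_tendsto (σ : ℝ) (hσ : 1/2 < σ) :
    Tendsto (geomA σ) atTop (nhds (Cconst (2*σ-1))) := by
  refine (geom_tendsto (2*σ-1) (by linarith)).congr (fun k => ?_)
  exact Finset.sum_congr rfl fun l _ => by congr 1; ring

lemma geomD_tendsto (σ : ℝ) (hσ : 1/2 < σ) :
    Tendsto (geomD σ) atTop (nhds (Cconst (2*σ))) := by
  refine (geom_tendsto (2*σ) (by linarith)).congr (fun k => ?_)
  exact Finset.sum_congr rfl fun l _ => by congr 1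

/-- mean-field bound for the mixture state of the DHM. -/
theorem dyson_mean_field_mixture_bound (β J σ h m1 m2 : ℝ) (hβ : 0 < β) (hJ : 0 < J)
    (hσ : σ ∈ Set.Ioo (1 / 2 : ℝ) 1) (F : ℝ)
    (hF : Tendsto (fun k => dysonF h β J σ k) atTop (nhds F)) :
    F ≥ Real.log 2 +
        (1 / 2) * Real.log (Real.cosh (β * h + β * J * Cconst (2 * σ - 1) * m1)) +
        (1 / 2) * Real.log (Real.cosh (β * h + β * J * Cconst (2 * σ - 1) * m2)) -
        β * J * Cconst (2 * σ) / 2 -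
        β * J * Cconst (2 * σ - 1) / 2 * ((m1 ^ 2 + m2 ^ 2) / 2) := by
  obtain ⟨hσ1, _⟩ := hσ
  have hA := geomA_tendsto σ hσ1
  have hD := geomD_tendsto σ hσ1
  have hD' : Tendsto (fun k => geomD σ (k+1)) atTop (nhds (Cconst (2*σ))) :=
    hD.comp (tendsto_add_atTop_nat 1)
  have hF' : Tendsto (fun k => dysonF h β J σ (k+1)) atTop (nhds F) :=
    hF.comp (tendsto_add_atTop_nat 1)
  set C1 := Cconst (2*σ-1)
  set C2 := Cconst (2*σ)
  have hLgen : ∀ c : ℝ, Tendsto (fun k => Real.log (Real.cosh (β*h + β*J*c*geomA σ k))) atTop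
      (nhds (Real.log (Real.cosh (β*h + β*J*c*C1)))) := by
    intro c
    have ht1 : Tendsto (fun k => β*h + β*J*c*geomA σ k) atTop
        (nhds (β*h + β*J*c*C1)) := tendsto_const_nhds.add (hA.const_mul (β*J*c))
    have ht2 : Tendsto (fun k => Real.cosh (β*h + β*J*c*geomA σ k)) atTop
        (nhds (Real.cosh (β*h + β*J*c*C1))) :=
      (Real.continuous_cosh.continuousAt).tendsto.comp ht1
    exact ((Real.continuousAt_log (Real.cosh_pos _).ne').tendsto).comp ht2
  have hL1 := hLgen m1
  have hL2 := hLgen m2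
  have hLt : Tendsto (fun k => Real.log 2
      + (1/2) * Real.log (Real.cosh (β*h + β*J*m1*geomA σ k))
      + (1/2) * Real.log (Real.cosh (β*h + β*J*m2*geomA σ k))
      - β*J*geomA σ k*(m1^2+m2^2)/4 - β*J*geomD σ (k+1)/2) atTop
      (nhds (Real.log 2
        + (1/2) * Real.log (Real.cosh (β*h + β*J*m1*C1))
        + (1/2) * Real.log (Real.cosh (β*h + β*J*m2*C1))
        - β*J*C1*(m1^2+m2^2)/4 - β*J*C2/2)) := by
    apply Tendsto.sub
    apply Tendsto.sub
    · exact ((tendsto_const_nhds.add (hL1.const_mul (1/2))).add (hL2.const_mul (1/2)))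
    · exact ((hA.const_mul (β*J)).mul_const (m1^2+m2^2)).div_const 4
    · exact (hD'.const_mul (β*J)).div_const 2
  have hle := le_of_tendsto_of_tendsto' hLt hF'
    (fun k => dysonF_ge β J σ h m1 m2 hβ hJ k)
  have heq : Real.log 2
        + (1/2) * Real.log (Real.cosh (β*h + β*J*m1*C1))
        + (1/2) * Real.log (Real.cosh (β*h + β*J*m2*C1))
        - β*J*C1*(m1^2+m2^2)/4 - β*J*C2/2
      = Real.log 2 +
        (1 / 2) * Real.log (Real.cosh (β * h + β * J * C1 * m1)) +
        (1 / 2) * Real.log (Real.cosh (β * h + β * J * C1 * m2)) -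
        β * J * C2 / 2 -
        β * J * C1 / 2 * ((m1 ^ 2 + m2 ^ 2) / 2) := by
    rw [show β*h + β*J*m1*C1 = β*h + β*J*C1*m1 by ring,
        show β*h + β*J*m2*C1 = β*h + β*J*C1*m2 by ring]
    ring
  rw [← heq]
  exact hle
end

section
/- (Mean-field bound for the ferromagnetic/pure state of the DHM.) For every β > 0, J > 0, σ ∈ (1/2,1), h ∈ ℝ and every real m, the thermodynamic-limit free energy satisfies f(h,β,J,σ) ≥ log 2 + log cosh(βh + βJ C_{2σ−1} m) − (βJ C_{2σ})/2 − (βJ C_{2σ−1}/2) m². -/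
open Real Filter

lemma tanh_sq_le_one (t : ℝ) : Real.tanh t ^ 2 ≤ 1 := by
  have h := Real.cosh_pos t
  have h2 : Real.cosh t ^ 2 = Real.sinh t ^ 2 + 1 := Real.cosh_sq t
  rw [Real.tanh_eq_sinh_div_cosh, div_pow, div_le_one (by positivity)]
  nlinarith

noncomputable def q (t : ℝ) (b : Bool) : ℝ := Real.exp (t * spin b) / (2 * Real.cosh t)

lemma two_cosh_pos (t : ℝ) : 0 < 2 * Real.cosh t := by positivity

lemma q_pos (t : ℝ) (b : Bool) : 0 < q t b := div_pos (Real.exp_pos _) (two_cosh_pos t)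

lemma q_sum (t : ℝ) : q t true + q t false = 1 := by
  have h := (two_cosh_pos t).ne'
  simp only [q, spin, if_true, if_false, mul_one, mul_neg_one, Bool.false_eq_true]
  rw [← add_div, Real.cosh_eq]
  field_simp

lemma q_spin_sum (t : ℝ) : q t true * spin true + q t false * spin false = Real.tanh t := by
  have h := (Real.cosh_pos t).ne'
  simp only [q, spin, if_true, if_false, mul_one, mul_neg_one, Bool.false_eq_true]
  rw [Real.tanh_eq_sinh_div_cosh, Real.sinh_eq, Real.cosh_eq]
  field_simp
  ring

section
variable {ι : Type*} [Fintype ι] [DecidableEq ι]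

lemma sum_prod_bool (g : ι → Bool → ℝ) :
    ∑ S : ι → Bool, ∏ i, g i (S i) = ∏ i, (g i true + g i false) := by
  have := (Fintype.prod_sum (fun (i : ι) (b : Bool) => g i b)).symm
  simpa using this

noncomputable def mu (t : ℝ) (S : ι → Bool) : ℝ := ∏ i, q t (S i)

lemma mu_pos (t : ℝ) (S : ι → Bool) : 0 < mu t S :=
  Finset.prod_pos fun i _ => q_pos t (S i)

lemma mass (t : ℝ) : ∑ S : ι → Bool, mu t S = 1 := by
  unfold mu
  rw [sum_prod_bool]
  simp [q_sum]

lemma one_point (t : ℝ) (i : ι) :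
    ∑ S : ι → Bool, mu t S * spin (S i) = Real.tanh t := by
  have key : ∀ S : ι → Bool, mu t S * spin (S i)
      = ∏ l, (q t (S l) * (if l = i then spin (S l) else 1)) := by
    intro S
    rw [Finset.prod_mul_distrib, Finset.prod_ite_eq' Finset.univ i (fun l => spin (S l))]
    simp [mu]
  simp_rw [key]
  rw [sum_prod_bool (fun l b => q t b * (if l = i then spin b else 1))]
  have h2 : ∀ l : ι, (q t true * (if l = i then spin true else 1)
      + q t false * (if l = i then spin false else 1)) = if l = i then Real.tanh t else 1 := by
    intro l; split_ifs
    · exact q_spin_sum t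
    · simpa using q_sum t
  rw [Finset.prod_congr rfl (fun l _ => h2 l), Finset.prod_ite_eq' Finset.univ i (fun _ => Real.tanh t)]
  simp

lemma two_point (t : ℝ) {i j : ι} (hij : i ≠ j) :
    ∑ S : ι → Bool, mu t S * (spin (S i) * spin (S j)) = Real.tanh t ^ 2 := by
  have key : ∀ S : ι → Bool, mu t S * (spin (S i) * spin (S j))
      = ∏ l, (q t (S l) * ((if l = i then spin (S l) else 1) * (if l = j then spin (S l) else 1))) := by
    intro S
    rw [Finset.prod_mul_distrib, Finset.prod_mul_distrib,
      Finset.prod_ite_eq' Finset.univ i (fun l => spin (S l)),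
      Finset.prod_ite_eq' Finset.univ j (fun l => spin (S l))]
    simp [mu]
  simp_rw [key]
  rw [sum_prod_bool (fun l b => q t b * ((if l = i then spin b else 1) * (if l = j then spin b else 1)))]
  have h2 : ∀ l : ι, (q t true * ((if l = i then spin true else 1) * (if l = j then spin true else 1))
      + q t false * ((if l = i then spin false else 1) * (if l = j then spin false else 1)))
      = if l = i then Real.tanh t else if l = j then Real.tanh t else 1 := by
    intro l
    rcases eq_or_ne l i with rfl | hli
    · rw [if_pos rfl, if_pos rfl, if_neg hij, if_neg hij, if_pos rfl]
      simpa using q_spin_sum t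
    · rw [if_neg hli, if_neg hli, if_neg hli]
      rcases eq_or_ne l j with rfl | hlj
      · rw [if_pos rfl, if_pos rfl, if_pos rfl]
        simpa using q_spin_sum t
      · rw [if_neg hlj, if_neg hlj, if_neg hlj]
        simpa using q_sum t
  rw [Finset.prod_congr rfl (fun l _ => h2 l)]
  rw [← Finset.mul_prod_erase Finset.univ _ (Finset.mem_univ i), if_pos rfl]
  have hj : j ∈ Finset.univ.erase i := Finset.mem_erase.2 ⟨hij.symm, Finset.mem_univ j⟩
  rw [← Finset.mul_prod_erase _ _ hj, if_neg hij.symm, if_pos rfl]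
  rw [Finset.prod_eq_one (fun l hl => by
    rw [Finset.mem_erase, Finset.mem_erase] at hl
    rw [if_neg hl.2.1, if_neg hl.1])]
  ring

lemma spin_sum (t : ℝ) :
    ∑ S : ι → Bool, mu t S * (∑ i, spin (S i)) = (Fintype.card ι : ℝ) * Real.tanh t := by
  simp_rw [Finset.mul_sum]
  rw [Finset.sum_comm]
  rw [Finset.sum_congr rfl (fun i _ => one_point t i)]
  simp [mul_comm]

lemma log_mu (t : ℝ) (S : ι → Bool) :
    Real.log (mu t S) = t * (∑ i, spin (S i)) - (Fintype.card ι : ℝ) * Real.log (2 * Real.cosh t) := by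
  unfold mu
  rw [Real.log_prod (fun i _ => (q_pos t (S i)).ne')]
  have h1 : ∀ b, Real.log (q t b) = t * spin b - Real.log (2 * Real.cosh t) := by
    intro b
    unfold q
    rw [Real.log_div (Real.exp_ne_zero _) (two_cosh_pos t).ne', Real.log_exp]
  simp_rw [h1]
  rw [Finset.sum_sub_distrib, ← Finset.mul_sum]
  simp [mul_comm]

lemma jensen_bound (t : ℝ) (g : (ι → Bool) → ℝ) :
    ∑ S : ι → Bool, mu t S * (g S - Real.log (mu t S)) ≤ Real.log (∑ S : ι → Bool, Real.exp (g S)) := by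
  have h1 : ∑ S : ι → Bool, Real.exp (g S)
      = ∑ S : ι → Bool, mu t S * Real.exp (g S - Real.log (mu t S)) := by
    refine Finset.sum_congr rfl fun S _ => ?_
    rw [Real.exp_sub, Real.exp_log (mu_pos t S)]
    field_simp
    rw [div_self (mu_pos t S).ne']
  have h2 := convexOn_exp.map_sum_le (t := Finset.univ) (w := fun S : ι → Bool => mu t S)
    (p := fun S => g S - Real.log (mu t S)) (fun S _ => (mu_pos t S).le) (mass t)
    (fun S _ => Set.mem_univ _)
  simp only [smul_eq_mul] at h2
  calc ∑ S : ι → Bool, mu t S * (g S - Real.log (mu t S))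
      = Real.log (Real.exp (∑ S : ι → Bool, mu t S * (g S - Real.log (mu t S)))) := (Real.log_exp _).symm
    _ ≤ Real.log (∑ S : ι → Bool, mu t S * Real.exp (g S - Real.log (mu t S))) := by
        apply Real.log_le_log (Real.exp_pos _) h2
    _ = Real.log (∑ S : ι → Bool, Real.exp (g S)) := by rw [← h1]

end

def bjoin {k : ℕ} (A B : Fin (2 ^ k) → Bool) : Fin (2 ^ (k + 1)) → Bool := fun i =>
  if h : i.1 < 2 ^ k then A ⟨i.1, h⟩
  else B ⟨i.1 - 2 ^ k, by
    have h2 : 2 ^ (k + 1) = 2 ^ k + 2 ^ k := by rw [pow_succ]; ring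
    have := i.2; omega⟩

lemma bjoin_left {k : ℕ} (A B : Fin (2 ^ k) → Bool) (i : Fin (2 ^ k)) :
    bjoin A B (finLeft i) = A i := by
  simp only [bjoin, finLeft, i.2, dif_pos, Fin.eta]
  exact dif_pos i.2

lemma bjoin_right {k : ℕ} (A B : Fin (2 ^ k) → Bool) (i : Fin (2 ^ k)) :
    bjoin A B (finRight i) = B i := by
  have h : ¬ ((finRight i).1 < 2 ^ k) := by simp [finRight]
  rw [bjoin, dif_neg h]
  congr 1
  ext
  simp [finRight]

def splitEquiv (k : ℕ) : ((Fin (2 ^ k) → Bool) × (Fin (2 ^ k) → Bool)) ≃ (Fin (2 ^ (k + 1)) → Bool) where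
  toFun p := bjoin p.1 p.2
  invFun S := (fun i => S (finLeft i), fun i => S (finRight i))
  left_inv p := by
    ext i
    · exact bjoin_left p.1 p.2 i
    · exact bjoin_right p.1 p.2 i
  right_inv S := by
    funext i
    show bjoin _ _ i = S i
    by_cases h : i.1 < 2 ^ k
    · rw [bjoin, dif_pos h]
      rfl
    · rw [bjoin, dif_neg h]
      show S (finRight ⟨i.1 - 2 ^ k, _⟩) = S i
      congr 1
      ext
      simp only [finRight]
      omega

lemma sum_split_s5 {k : ℕ} (F : (Fin (2 ^ (k + 1)) → Bool) → ℝ) :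
    ∑ S : Fin (2 ^ (k + 1)) → Bool, F S
      = ∑ A : Fin (2 ^ k) → Bool, ∑ B : Fin (2 ^ k) → Bool, F (bjoin A B) := by
  rw [← Equiv.sum_comp (splitEquiv k) F, Fintype.sum_prod_type]
  rfl

def halfEquiv (k : ℕ) : (Fin (2 ^ k) ⊕ Fin (2 ^ k)) ≃ Fin (2 ^ (k + 1)) :=
  finSumFinEquiv.trans (finCongr (by rw [pow_succ]; ring))

lemma halfEquiv_inl {k : ℕ} (i : Fin (2 ^ k)) : halfEquiv k (Sum.inl i) = finLeft i :=
  Fin.ext (by simp [halfEquiv, finLeft])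

lemma halfEquiv_inr {k : ℕ} (i : Fin (2 ^ k)) : halfEquiv k (Sum.inr i) = finRight i :=
  Fin.ext (by simp [halfEquiv, finRight, Nat.add_comm])

lemma prod_split {k : ℕ} (f : Fin (2 ^ (k + 1)) → ℝ) :
    ∏ i, f i = (∏ i : Fin (2 ^ k), f (finLeft i)) * ∏ i : Fin (2 ^ k), f (finRight i) := by
  rw [← Equiv.prod_comp (halfEquiv k) f, Fintype.prod_sum_type]
  refine congrArg₂ (· * ·) ?_ ?_
  · exact Finset.prod_congr rfl fun i _ => congrArg f (halfEquiv_inl i)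
  · exact Finset.prod_congr rfl fun i _ => congrArg f (halfEquiv_inr i)

noncomputable def pairSum (N : ℕ) : ℝ := ∑ i : Fin N, ∑ j : Fin N, if i < j then (1 : ℝ) else 0

lemma pairSum_eq (N : ℕ) : pairSum N = ((N : ℝ) ^ 2 - N) / 2 := by
  have hsum : ∀ (f g : Fin N → Fin N → ℝ),
      (∑ i : Fin N, ∑ j : Fin N, (f i j + g i j))
        = (∑ i : Fin N, ∑ j : Fin N, f i j) + (∑ i : Fin N, ∑ j : Fin N, g i j) := by
    intro f g
    rw [← Finset.sum_add_distrib]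
    exact Finset.sum_congr rfl fun i _ => Finset.sum_add_distrib
  have h2 : (∑ i : Fin N, ∑ j : Fin N, if j < i then (1 : ℝ) else 0) = pairSum N := by
    rw [pairSum, Finset.sum_comm]
  have h3 : (∑ i : Fin N, ∑ j : Fin N, if i = j then (1 : ℝ) else 0) = (N : ℝ) := by simp
  have key : (N : ℝ) ^ 2 = pairSum N + (pairSum N + N) := by
    calc (N : ℝ) ^ 2 = ∑ _i : Fin N, ∑ _j : Fin N, (1 : ℝ) := by simp [sq]
      _ = ∑ i : Fin N, ∑ j : Fin N, ((if i < j then (1 : ℝ) else 0)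
            + ((if j < i then (1 : ℝ) else 0) + (if i = j then (1 : ℝ) else 0))) := by
          refine Finset.sum_congr rfl fun i _ => Finset.sum_congr rfl fun j _ => ?_
          rcases lt_trichotomy i j with h | h | h
          · simp [h, lt_asymm h, h.ne]
          · simp [h]
          · simp [h, lt_asymm h, (h.ne).symm, h.ne']
      _ = pairSum N + (pairSum N + N) := by
          rw [hsum, hsum, h2, h3, pairSum]
  linarith

noncomputable def EH (t J σ : ℝ) (k : ℕ) : ℝ :=
  ∑ S : Fin (2 ^ k) → Bool, mu t S * dysonH J σ k S

lemma mu_bjoin {k : ℕ} (t : ℝ) (A B : Fin (2 ^ k) → Bool) :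
    mu t (bjoin A B) = mu t A * mu t B := by
  unfold mu
  rw [prod_split (fun i => q t (bjoin A B i))]
  refine congrArg₂ (· * ·) ?_ ?_
  · exact Finset.prod_congr rfl fun i _ => congrArg (q t) (bjoin_left A B i)
  · exact Finset.prod_congr rfl fun i _ => congrArg (q t) (bjoin_right A B i)

lemma EH_succ (t J σ : ℝ) (k : ℕ) : EH t J σ (k + 1) = 2 * EH t J σ k
    - J / (2 : ℝ) ^ (2 * σ * ((k : ℝ) + 1)) * (Real.tanh t ^ 2 * pairSum (2 ^ (k + 1))) := by
  have hpair : ∑ S : Fin (2 ^ (k + 1)) → Bool, mu t S *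
      (∑ i : Fin (2 ^ (k + 1)), ∑ j : Fin (2 ^ (k + 1)), if i < j then spin (S i) * spin (S j) else 0)
      = Real.tanh t ^ 2 * pairSum (2 ^ (k + 1)) := by
    have step1 : ∑ S : Fin (2 ^ (k + 1)) → Bool, mu t S *
        (∑ i : Fin (2 ^ (k + 1)), ∑ j : Fin (2 ^ (k + 1)), if i < j then spin (S i) * spin (S j) else 0)
        = ∑ i : Fin (2 ^ (k + 1)), ∑ j : Fin (2 ^ (k + 1)),
            (if i < j then Real.tanh t ^ 2 else 0) := by
      simp_rw [Finset.mul_sum]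
      rw [Finset.sum_comm]
      refine Finset.sum_congr rfl fun i _ => ?_
      rw [Finset.sum_comm]
      refine Finset.sum_congr rfl fun j _ => ?_
      by_cases hij : i < j
      · simp_rw [if_pos hij]
        exact two_point t hij.ne
      · simp_rw [if_neg hij]
        simp
    rw [step1, pairSum, Finset.mul_sum]
    refine Finset.sum_congr rfl fun i _ => ?_
    rw [Finset.mul_sum]
    refine Finset.sum_congr rfl fun j _ => ?_
    split_ifs <;> ring
  have hfirst : ∑ S : Fin (2 ^ (k + 1)) → Bool, mu t S *
      (dysonH J σ k (fun i => S (finLeft i)) + dysonH J σ k (fun i => S (finRight i)))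
      = 2 * EH t J σ k := by
    rw [sum_split_s5 (fun S => mu t S *
      (dysonH J σ k (fun i => S (finLeft i)) + dysonH J σ k (fun i => S (finRight i))))]
    have hA : ∀ A B : Fin (2 ^ k) → Bool, (fun i => bjoin A B (finLeft i)) = A :=
      fun A B => funext (bjoin_left A B)
    have hB : ∀ A B : Fin (2 ^ k) → Bool, (fun i => bjoin A B (finRight i)) = B :=
      fun A B => funext (bjoin_right A B)
    simp_rw [mu_bjoin, hA, hB]
    have inner : ∀ A : Fin (2 ^ k) → Bool,
        ∑ B : Fin (2 ^ k) → Bool, mu t A * mu t B * (dysonH J σ k A + dysonH J σ k B)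
        = mu t A * dysonH J σ k A + mu t A * EH t J σ k := by
      intro A
      calc ∑ B : Fin (2 ^ k) → Bool, mu t A * mu t B * (dysonH J σ k A + dysonH J σ k B)
          = ∑ B : Fin (2 ^ k) → Bool,
              (mu t A * dysonH J σ k A * mu t B + mu t A * (mu t B * dysonH J σ k B)) :=
            Finset.sum_congr rfl fun B _ => by ring
        _ = mu t A * dysonH J σ k A * (∑ B : Fin (2 ^ k) → Bool, mu t B)
              + mu t A * (∑ B : Fin (2 ^ k) → Bool, mu t B * dysonH J σ k B) := by
            rw [Finset.sum_add_distrib, ← Finset.mul_sum, ← Finset.mul_sum]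
        _ = mu t A * dysonH J σ k A + mu t A * EH t J σ k := by
            rw [mass t, mul_one]; rfl
    rw [Finset.sum_congr rfl fun A _ => inner A, Finset.sum_add_distrib, ← Finset.sum_mul,
      mass t]
    show EH t J σ k + 1 * EH t J σ k = 2 * EH t J σ k
    ring
  have expand : ∀ S : Fin (2 ^ (k + 1)) → Bool, mu t S * dysonH J σ (k + 1) S
      = mu t S * (dysonH J σ k (fun i => S (finLeft i)) + dysonH J σ k (fun i => S (finRight i)))
        - J / (2 : ℝ) ^ (2 * σ * ((k : ℝ) + 1)) * (mu t S *
          (∑ i : Fin (2 ^ (k + 1)), ∑ j : Fin (2 ^ (k + 1)), if i < j then spin (S i) * spin (S j) else 0)) := by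
    intro S
    rw [dysonH]
    ring
  calc EH t J σ (k + 1)
      = ∑ S : Fin (2 ^ (k + 1)) → Bool, (mu t S *
          (dysonH J σ k (fun i => S (finLeft i)) + dysonH J σ k (fun i => S (finRight i)))
        - J / (2 : ℝ) ^ (2 * σ * ((k : ℝ) + 1)) * (mu t S *
          (∑ i : Fin (2 ^ (k + 1)), ∑ j : Fin (2 ^ (k + 1)), if i < j then spin (S i) * spin (S j) else 0))) :=
        Finset.sum_congr rfl fun S _ => expand S
    _ = 2 * EH t J σ k
        - J / (2 : ℝ) ^ (2 * σ * ((k : ℝ) + 1)) * (Real.tanh t ^ 2 * pairSum (2 ^ (k + 1))) := by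
        rw [Finset.sum_sub_distrib, ← Finset.mul_sum, hfirst, hpair]

lemma EH_closed (t J σ : ℝ) (k : ℕ) :
    EH t J σ k = -(J * Real.tanh t ^ 2 * ((2 : ℝ) ^ k *
      (∑ l ∈ Finset.range k,
        ((2 : ℝ) ^ (-(2 * σ - 1) * ((l : ℝ) + 1)) - (2 : ℝ) ^ (-(2 * σ) * ((l : ℝ) + 1)))) / 2)) := by
  induction k with
  | zero => simp [EH, dysonH]
  | succ k ih =>
    rw [EH_succ, ih, pairSum_eq, Finset.sum_range_succ]
    have hc : (0 : ℝ) < (2 : ℝ) ^ (2 * σ * ((k : ℝ) + 1)) := Real.rpow_pos_of_pos (by norm_num) _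
    have hcast : ((2 ^ (k + 1) : ℕ) : ℝ) = 2 * (2 : ℝ) ^ k := by
      push_cast [pow_succ]; ring
    have hrp : (2 : ℝ) ^ ((k : ℝ) + 1) = 2 * (2 : ℝ) ^ k := by
      rw [show ((k : ℝ) + 1) = ((k + 1 : ℕ) : ℝ) by push_cast; ring, Real.rpow_natCast, pow_succ]
      ring
    have ha : (2 : ℝ) ^ (-(2 * σ - 1) * ((k : ℝ) + 1))
        = 2 * (2 : ℝ) ^ k / (2 : ℝ) ^ (2 * σ * ((k : ℝ) + 1)) := by
      rw [show (-(2 * σ - 1) * ((k : ℝ) + 1)) = ((k : ℝ) + 1) - 2 * σ * ((k : ℝ) + 1) by ring,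
        Real.rpow_sub (by norm_num : (0 : ℝ) < 2), hrp]
    have hb : (2 : ℝ) ^ (-(2 * σ) * ((k : ℝ) + 1))
        = 1 / (2 : ℝ) ^ (2 * σ * ((k : ℝ) + 1)) := by
      rw [show (-(2 * σ) * ((k : ℝ) + 1)) = -(2 * σ * ((k : ℝ) + 1)) by ring,
        Real.rpow_neg (by norm_num : (0 : ℝ) ≤ 2), one_div]
    rw [hcast, ha, hb]
    generalize (∑ l ∈ Finset.range k,
      ((2 : ℝ) ^ (-(2 * σ - 1) * ((l : ℝ) + 1)) - (2 : ℝ) ^ (-(2 * σ) * ((l : ℝ) + 1)))) = Sk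
    field_simp
    ring

lemma dysonF_ge_s5 (h β J σ t : ℝ) (k : ℕ) :
    β * J * Real.tanh t ^ 2 *
        (∑ l ∈ Finset.range k,
          ((2 : ℝ) ^ (-(2 * σ - 1) * ((l : ℝ) + 1)) - (2 : ℝ) ^ (-(2 * σ) * ((l : ℝ) + 1)))) / 2
      + β * h * Real.tanh t - t * Real.tanh t + Real.log (2 * Real.cosh t)
    ≤ dysonF h β J σ k := by
  have hcard : (Fintype.card (Fin (2 ^ k)) : ℝ) = (2 : ℝ) ^ k := by
    simp
  have key := jensen_bound (ι := Fin (2 ^ k)) t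
    (fun S => -β * dysonH J σ k S + β * h * ∑ i, spin (S i))
  have hG : ∑ S : Fin (2 ^ k) → Bool, mu t S *
      ((-β * dysonH J σ k S + β * h * ∑ i, spin (S i)) - Real.log (mu t S))
      = -β * EH t J σ k + (β * h - t) * ((2 : ℝ) ^ k * Real.tanh t)
        + (2 : ℝ) ^ k * Real.log (2 * Real.cosh t) := by
    have step : ∀ S : Fin (2 ^ k) → Bool, mu t S *
        ((-β * dysonH J σ k S + β * h * ∑ i, spin (S i)) - Real.log (mu t S))
        = -β * (mu t S * dysonH J σ k S) + (β * h - t) * (mu t S * ∑ i, spin (S i))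
          + ((Fintype.card (Fin (2 ^ k)) : ℝ) * Real.log (2 * Real.cosh t)) * mu t S := by
      intro S
      rw [log_mu t S]
      ring
    rw [Finset.sum_congr rfl fun S _ => step S, Finset.sum_add_distrib, Finset.sum_add_distrib,
      ← Finset.mul_sum, ← Finset.mul_sum, ← Finset.mul_sum, spin_sum t, mass t, hcard]
    show -β * EH t J σ k + _ + _ = _
    ring
  rw [hG, EH_closed] at key
  have hpow : (0 : ℝ) < (2 : ℝ) ^ k := by positivity
  have := mul_le_mul_of_nonneg_left key (le_of_lt (inv_pos.2 hpow))
  rw [dysonF]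
  refine le_trans (le_of_eq ?_) this
  field_simp
  ring

/-- mean-field bound for the pure (ferromagnetic) state of the DHM. -/
theorem dyson_mean_field_pure_bound (β J σ h m : ℝ) (hβ : 0 < β) (hJ : 0 < J)
    (hσ : σ ∈ Set.Ioo (1 / 2 : ℝ) 1) (F : ℝ)
    (hF : Tendsto (fun k => dysonF h β J σ k) atTop (nhds F)) :
    F ≥ Real.log 2 + Real.log (Real.cosh (β * h + β * J * Cconst (2 * σ - 1) * m)) -
        β * J * Cconst (2 * σ) / 2 - β * J * Cconst (2 * σ - 1) / 2 * m ^ 2 := by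
  obtain ⟨hσ1, hσ2⟩ := hσ
  set a : ℝ := (2 : ℝ) ^ (-(2 * σ - 1)) with hadef
  set b : ℝ := (2 : ℝ) ^ (-(2 * σ)) with hbdef
  have ha0 : 0 ≤ a := le_of_lt (Real.rpow_pos_of_pos (by norm_num) _)
  have ha1 : a < 1 := Real.rpow_lt_one_of_one_lt_of_neg (by norm_num) (by linarith)
  have hb0 : 0 ≤ b := le_of_lt (Real.rpow_pos_of_pos (by norm_num) _)
  have hb1 : b < 1 := Real.rpow_lt_one_of_one_lt_of_neg (by norm_num) (by linarith)
  have hapos : 0 < a := Real.rpow_pos_of_pos (by norm_num) _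
  have hbpos : 0 < b := Real.rpow_pos_of_pos (by norm_num) _
  have hC1eq : Cconst (2 * σ - 1) = a / (1 - a) := rfl
  have hC2eq : Cconst (2 * σ) = b / (1 - b) := rfl
  set C1 : ℝ := Cconst (2 * σ - 1) with hC1def
  set C2 : ℝ := Cconst (2 * σ) with hC2def
  have hC1pos : 0 < C1 := by rw [hC1eq]; exact div_pos hapos (by linarith)
  have hC2pos : 0 < C2 := by rw [hC2eq]; exact div_pos hbpos (by linarith)
  set t : ℝ := β * h + β * J * C1 * m with htdef
  -- geometric sums
  have hterma : ∀ l : ℕ, (2 : ℝ) ^ (-(2 * σ - 1) * ((l : ℝ) + 1)) = a ^ (l + 1) := by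
    intro l
    rw [← Real.rpow_natCast a (l + 1), hadef,
      ← Real.rpow_mul (by norm_num : (0 : ℝ) ≤ 2)]
    congr 1
    push_cast
    ring
  have htermb : ∀ l : ℕ, (2 : ℝ) ^ (-(2 * σ) * ((l : ℝ) + 1)) = b ^ (l + 1) := by
    intro l
    rw [← Real.rpow_natCast b (l + 1), hbdef,
      ← Real.rpow_mul (by norm_num : (0 : ℝ) ≤ 2)]
    congr 1
    push_cast
    ring
  have hgeo : ∀ c : ℝ, 0 ≤ c → c < 1 →
      Tendsto (fun k => ∑ l ∈ Finset.range k, c ^ (l + 1)) atTop (nhds (c / (1 - c))) := by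
    intro c hc0 hc1
    have h1 := (hasSum_geometric_of_lt_one hc0 hc1).tendsto_sum_nat
    have h2 := h1.const_mul c
    have h3 : (fun k => ∑ l ∈ Finset.range k, c ^ (l + 1))
        = fun k => c * ∑ l ∈ Finset.range k, c ^ l := by
      funext k
      rw [Finset.mul_sum]
      exact Finset.sum_congr rfl fun l _ => pow_succ' c l
    rw [h3, div_eq_mul_inv]
    exact h2
  have hsum : Tendsto (fun k => ∑ l ∈ Finset.range k,
      ((2 : ℝ) ^ (-(2 * σ - 1) * ((l : ℝ) + 1)) - (2 : ℝ) ^ (-(2 * σ) * ((l : ℝ) + 1))))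
      atTop (nhds (C1 - C2)) := by
    have heq : (fun k => ∑ l ∈ Finset.range k,
        ((2 : ℝ) ^ (-(2 * σ - 1) * ((l : ℝ) + 1)) - (2 : ℝ) ^ (-(2 * σ) * ((l : ℝ) + 1))))
        = fun k => (∑ l ∈ Finset.range k, a ^ (l + 1)) - ∑ l ∈ Finset.range k, b ^ (l + 1) := by
      funext k
      rw [← Finset.sum_sub_distrib]
      exact Finset.sum_congr rfl fun l _ => by rw [hterma l, htermb l]
    rw [heq, hC1eq, hC2eq]
    exact (hgeo a ha0 ha1).sub (hgeo b hb0 hb1)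
  have hL : Tendsto (fun k => β * J * Real.tanh t ^ 2 *
      (∑ l ∈ Finset.range k,
        ((2 : ℝ) ^ (-(2 * σ - 1) * ((l : ℝ) + 1)) - (2 : ℝ) ^ (-(2 * σ) * ((l : ℝ) + 1)))) / 2
      + β * h * Real.tanh t - t * Real.tanh t + Real.log (2 * Real.cosh t)) atTop
      (nhds (β * J * Real.tanh t ^ 2 * (C1 - C2) / 2
        + β * h * Real.tanh t - t * Real.tanh t + Real.log (2 * Real.cosh t))) := by
    exact ((((hsum.const_mul (β * J * Real.tanh t ^ 2)).div_const 2).add_const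
      (β * h * Real.tanh t)).sub_const (t * Real.tanh t)).add_const (Real.log (2 * Real.cosh t))
  have hFge : β * J * Real.tanh t ^ 2 * (C1 - C2) / 2
      + β * h * Real.tanh t - t * Real.tanh t + Real.log (2 * Real.cosh t) ≤ F :=
    le_of_tendsto_of_tendsto' hL hF (fun k => dysonF_ge_s5 h β J σ t k)
  -- final algebra
  have hT2 : Real.tanh t ^ 2 ≤ 1 := tanh_sq_le_one t
  have hlog : Real.log (2 * Real.cosh t) = Real.log 2 + Real.log (Real.cosh t) :=
    Real.log_mul (by norm_num) (Real.cosh_pos t).ne'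
  have heq : t * Real.tanh t
      = β * h * Real.tanh t + β * J * C1 * m * Real.tanh t := by
    rw [htdef]; ring
  have h1 : 0 ≤ β * J * C1 / 2 * (Real.tanh t - m) ^ 2 := by positivity
  have h2 : 0 ≤ β * J * C2 / 2 * (1 - Real.tanh t ^ 2) :=
    mul_nonneg (by positivity) (by linarith)
  rw [ge_iff_le]
  rw [hlog] at hFge
  nlinarith [h1, h2, hFge, heq]
end
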